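/- Deterministic ridge decomposition: let H be a separable real Hilbert space, ρ > 0, x_1, …, x_t ∈ H, ε_1, …, ε_t ∈ ℝ, θ* ∈ H, and y_i = ⟨x_i, θ*⟩ + ε_i. Set V = Σ_{i=1}^t x_i x_iᵀ, M = Σ_{i=1}^t x_i ε_i, and θ̂ = (V + ρI)^{-1} Σ_{i=1}^t x_i y_i. Then ‖(V + ρI)^{1/2}(θ̂ − θ*)‖ ≤ ‖(V + ρI)^{-1/2} M‖ + ρ^{1/2} ‖θ*‖. -/
import Mathlib


open MeasureTheory Filter Real
open scoped RealInnerProductSpace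

noncomputable def outerProd {H : Type*} [NormedAddCommGroup H] [InnerProductSpace ℝ H]
    (x : H) : H →L[ℝ] H :=
  (innerSL ℝ x).smulRight x

theorem stmt_10
    {H : Type*} [NormedAddCommGroup H] [InnerProductSpace ℝ H] [CompleteSpace H]
    [SecondCountableTopology H]
    (ρ : ℝ) (hρ : 0 < ρ) (t : ℕ)
    (x : Fin t → H) (ε : Fin t → ℝ) (θstar : H)
    (y : Fin t → ℝ) (hy : ∀ i, y i = ⟪ x i, θstar ⟫ + ε i)
    (V : H →L[ℝ] H) (hV : V = ∑ i, outerProd (x i))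
    (M : H) (hM : M = ∑ i, ε i • x i)
    (Q Qinv Ainv : H →L[ℝ] H)
    (hQpos : Q.IsPositive)
    (hQsq : Q ∘L Q = V + ρ • (1 : H →L[ℝ] H))
    (hQinv : Qinv ∘L Q = 1 ∧ Q ∘L Qinv = 1)
    (hAinv : Ainv ∘L (V + ρ • (1 : H →L[ℝ] H)) = 1 ∧
      (V + ρ • (1 : H →L[ℝ] H)) ∘L Ainv = 1)
    (θhat : H) (hθhat : θhat = Ainv (∑ i, y i • x i)) :
    ‖Q (θhat - θstar)‖ ≤ ‖Qinv M‖ + Real.sqrt ρ * ‖θstar‖ := by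
  obtain ⟨hQiQ, hQQi⟩ := hQinv
  obtain ⟨hA1, hA2⟩ := hAinv
  -- Ainv = Qinv ∘ Qinv
  have hAinv_eq : Ainv = Qinv ∘L Qinv := by
    have h : (V + ρ • (1 : H →L[ℝ] H)) ∘L (Qinv ∘L Qinv) = 1 := by
      rw [← hQsq]
      calc (Q ∘L Q) ∘L (Qinv ∘L Qinv) = Q ∘L ((Q ∘L Qinv) ∘L Qinv) := by
            simp [ContinuousLinearMap.comp_assoc]
        _ = 1 := by rw [hQQi]; ext v; exact congrFun (congrArg DFunLike.coe hQQi) v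
    calc Ainv = Ainv ∘L ((V + ρ • (1 : H →L[ℝ] H)) ∘L (Qinv ∘L Qinv)) := by
          rw [h]; rfl
      _ = (Ainv ∘L (V + ρ • (1 : H →L[ℝ] H))) ∘L (Qinv ∘L Qinv) := by
          rw [ContinuousLinearMap.comp_assoc]
      _ = Qinv ∘L Qinv := by rw [hA1, ContinuousLinearMap.one_def, ContinuousLinearMap.id_comp]
  have hQAinv : Q ∘L Ainv = Qinv := by
    rw [hAinv_eq, ← ContinuousLinearMap.comp_assoc, hQQi, ContinuousLinearMap.one_def,
      ContinuousLinearMap.id_comp]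
  -- symmetry of Q and Qinv
  have hsymQ : ∀ a b : H, ⟪Q a, b⟫ = ⟪a, Q b⟫ := fun a b =>
    hQpos.isSelfAdjoint.isSymmetric a b
  have hQQib : ∀ b : H, Q (Qinv b) = b := fun b =>
    congrFun (congrArg DFunLike.coe hQQi) b
  have hsym : ∀ a b : H, ⟪Qinv a, b⟫ = ⟪a, Qinv b⟫ := by
    intro a b
    calc ⟪Qinv a, b⟫ = ⟪Qinv a, Q (Qinv b)⟫ := by rw [hQQib]
      _ = ⟪Q (Qinv a), Qinv b⟫ := (hsymQ _ _).symm
      _ = ⟪a, Qinv b⟫ := by rw [hQQib]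
  -- V is positive
  have hVpos : ∀ w : H, 0 ≤ ⟪V w, w⟫ := by
    intro w
    rw [hV, ContinuousLinearMap.sum_apply, sum_inner]
    apply Finset.sum_nonneg
    intro i _
    simp only [outerProd, ContinuousLinearMap.smulRight_apply, innerSL_apply_apply,
      real_inner_smul_left]
    exact mul_self_nonneg _
  -- key norm bound : ‖Qinv z‖ ≤ ‖z‖ / √ρ
  have hbound : ∀ z : H, ‖Qinv z‖ ≤ ‖z‖ / Real.sqrt ρ := by
    intro z
    set w := Ainv z with hw
    have hzw : z = V w + ρ • w := by
      have := congrFun (congrArg DFunLike.coe hA2) z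
      simpa [ContinuousLinearMap.comp_apply, ContinuousLinearMap.add_apply,
        ContinuousLinearMap.smul_apply] using this.symm
    have hwle : ‖w‖ ≤ ‖z‖ / ρ := by
      by_cases hw0 : w = 0
      · simp [hw0]; positivity
      have h1 : ρ * ‖w‖ ^ 2 ≤ ⟪z, w⟫ := by
        rw [hzw, inner_add_left, real_inner_smul_left, real_inner_self_eq_norm_sq]
        nlinarith [hVpos w, real_inner_comm (V w) w]
      have h2 : ⟪z, w⟫ ≤ ‖z‖ * ‖w‖ := real_inner_le_norm z w
      have hwpos : 0 < ‖w‖ := norm_pos_iff.mpr hw0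
      rw [le_div_iff₀ hρ]
      nlinarith
    have hsq : ‖Qinv z‖ ^ 2 = ⟪z, w⟫ := by
      calc ‖Qinv z‖ ^ 2 = ⟪Qinv z, Qinv z⟫ := (real_inner_self_eq_norm_sq _).symm
        _ = ⟪z, Qinv (Qinv z)⟫ := hsym _ _
        _ = ⟪z, w⟫ := by rw [hw, hAinv_eq]; rfl
    have h3 : ‖Qinv z‖ ^ 2 ≤ ‖z‖ ^ 2 / ρ := by
      rw [hsq]
      calc ⟪z, w⟫ ≤ ‖z‖ * ‖w‖ := real_inner_le_norm z w
        _ ≤ ‖z‖ * (‖z‖ / ρ) := by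
            exact mul_le_mul_of_nonneg_left hwle (norm_nonneg z)
        _ = ‖z‖ ^ 2 / ρ := by ring
    have h4 := Real.sqrt_le_sqrt h3
    rwa [Real.sqrt_sq (norm_nonneg _), Real.sqrt_div (sq_nonneg _),
      Real.sqrt_sq (norm_nonneg _)] at h4
  -- sum identity
  have hsum : (∑ i, y i • x i) = V θstar + M := by
    rw [hV, hM, ContinuousLinearMap.sum_apply, ← Finset.sum_add_distrib]
    refine Finset.sum_congr rfl fun i _ => ?_
    rw [hy i, add_smul]
    simp [outerProd, ContinuousLinearMap.smulRight_apply]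
  -- θhat - θstar
  have hApt : ∀ z : H, Ainv (V z + ρ • z) = z := by
    intro z
    have := congrFun (congrArg DFunLike.coe hA1) z
    simpa [ContinuousLinearMap.comp_apply, ContinuousLinearMap.add_apply,
      ContinuousLinearMap.smul_apply] using this
  have hdiff : θhat - θstar = Ainv (M - ρ • θstar) := by
    have : θhat = θstar + Ainv (M - ρ • θstar) := by
      rw [hθhat, hsum]
      have : V θstar + M = (V θstar + ρ • θstar) + (M - ρ • θstar) := by abel
      rw [this, map_add, hApt]
    rw [this]; abel
  have hfin : Q (θhat - θstar) = Qinv M - ρ • Qinv θstar := by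
    rw [hdiff]
    have : Q (Ainv (M - ρ • θstar)) = Qinv (M - ρ • θstar) := by
      have := congrFun (congrArg DFunLike.coe hQAinv) (M - ρ • θstar)
      simpa using this
    rw [this, map_sub, Qinv.map_smul]
  rw [hfin]
  calc ‖Qinv M - ρ • Qinv θstar‖ ≤ ‖Qinv M‖ + ‖ρ • Qinv θstar‖ := norm_sub_le _ _
    _ = ‖Qinv M‖ + ρ * ‖Qinv θstar‖ := by
        rw [norm_smul, Real.norm_of_nonneg hρ.le]
    _ ≤ ‖Qinv M‖ + ρ * (‖θstar‖ / Real.sqrt ρ) := by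
        have := hbound θstar
        nlinarith
    _ = ‖Qinv M‖ + Real.sqrt ρ * ‖θstar‖ := by
        have hss : Real.sqrt ρ * Real.sqrt ρ = ρ := Real.mul_self_sqrt hρ.le
        have hs : (0:ℝ) < Real.sqrt ρ := Real.sqrt_pos.mpr hρ
        field_simp
        linear_combination -‖θstar‖ * hss
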